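/- arXiv:1005.3470 — 2 statements merged into one kernel-verified Lean document; each statement's English description precedes it below -/
import Mathlib

section
/- (2FleeSIR extent is dominated by SIR extent.) On any undirected graph, couple a 2FleeSIR epidemic and an SIR epidemic with identical initial infectees, identical removal probabilities, identical transmission probabilities, and shared randomness (the same removal coin flips and the same per-edge transmission coin flips). Then the set of nodes ever infected in the 2FleeSIR epidemic is a subset of the set of nodes ever infected in the SIR epidemic; in particular the mean final extent of 2FleeSIR is at most that of SIR. -/
open Finset

/-- A full assignment of random coins for the epidemic: initial-infection coins,
removal coins, and per-(ordered-)edge transmission coins. -/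
abbrev Coins (V : Type*) := (V → Bool) × (V → Bool) × (V → V → Bool)

variable {V : Type*} [Fintype V] [DecidableEq V]

/-- Probability weight of a coin outcome `ω` under induction probabilities `σ`,
removal probabilities `γ` and transmission probabilities `τ`. -/
def coinWeight (σ γ : V → ℝ) (τ : V → V → ℝ) (ω : Coins V) : ℝ :=
  (∏ v, if ω.1 v then σ v else 1 - σ v) *
  (∏ v, if ω.2.1 v then γ v else 1 - γ v) *
  ∏ u, ∏ v, if ω.2.2 u v then τ u v else 1 - τ u v

/-- One step of the discrete-time SIR process: state is `(I, R)`.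
An infected node, unless removed (removal coin `true`), transmits to each
susceptible out-neighbour whose transmission coin is `true`; then it recovers. -/
def sirStep (A : V → V → Bool) (ω : Coins V) (p : Finset V × Finset V) :
    Finset V × Finset V :=
  (univ.filter (fun v => v ∉ p.1 ∧ v ∉ p.2 ∧
      ∃ u ∈ p.1, ω.2.1 u = false ∧ A u v = true ∧ ω.2.2 u v = true),
   p.2 ∪ p.1)

/-- The discrete-time SIR process `(I_t, R_t)`; susceptibles are the complement. -/
def sirProc (A : V → V → Bool) (ω : Coins V) : ℕ → Finset V × Finset V
  | 0 => (univ.filter (fun v => ω.1 v = true), ∅)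
  | t + 1 => sirStep A ω (sirProc A ω t)

/-- The set of ever-infected nodes (the epidemic is stationary by time `n = |V|`). -/
def everInf (A : V → V → Bool) (ω : Coins V) : Finset V :=
  (sirProc A ω (Fintype.card V)).1 ∪ (sirProc A ω (Fintype.card V)).2

/-- The mean final extent `E(|R_n|)` of the SIR epidemic. -/
def meanExtent (A : V → V → Bool) (σ γ : V → ℝ) (τ : V → V → ℝ) : ℝ :=
  ∑ ω : Coins V, coinWeight σ γ τ ω * ((everInf A ω).card : ℝ)

/-- The probability that node `u` is ultimately infected. -/
def probInf (A : V → V → Bool) (σ γ : V → ℝ) (τ : V → V → ℝ) (u : V) : ℝ :=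
  ∑ ω : Coins V, coinWeight σ γ τ ω * (if u ∈ everInf A ω then 1 else 0)

variable {V : Type*} [Fintype V] [DecidableEq V]

/-- One step of 2FleeSIR: the state is `(I, R, Sev)`, where `Sev` is the set of
nodes that have (permanently) severed all their ties.  First (step 0) every
susceptible node observing at least `2` infected in-neighbours severs all its ties;
then infected nodes transmit as in SIR, except that no transmission can reach a
severed node; then infected nodes recover. -/
def fleeStep (A : V → V → Bool) (ω : Coins V) (p : Finset V × Finset V × Finset V) :
    Finset V × Finset V × Finset V :=
  let Sev : Finset V := p.2.2 ∪ Finset.univ.filter (fun v => v ∉ p.1 ∧ v ∉ p.2.1 ∧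
      2 ≤ (Finset.univ.filter (fun u => A u v = true ∧ u ∈ p.1)).card)
  (Finset.univ.filter (fun v => v ∉ p.1 ∧ v ∉ p.2.1 ∧ v ∉ Sev ∧
      ∃ u ∈ p.1, ω.2.1 u = false ∧ A u v = true ∧ ω.2.2 u v = true),
   p.2.1 ∪ p.1, Sev)

/-- The 2FleeSIR process `(I_t, R_t, Sev_t)`. -/
def fleeProc (A : V → V → Bool) (ω : Coins V) : ℕ → Finset V × Finset V × Finset V
  | 0 => (Finset.univ.filter (fun v => ω.1 v = true), ∅, ∅)
  | t + 1 => fleeStep A ω (fleeProc A ω t)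

/-- The ever-infected set of the 2FleeSIR epidemic. -/
def everFlee (A : V → V → Bool) (ω : Coins V) : Finset V :=
  (fleeProc A ω (Fintype.card V)).1 ∪ (fleeProc A ω (Fintype.card V)).2.1

/-- The mean final extent of the 2FleeSIR epidemic. -/
def fleeMeanExtent (A : V → V → Bool) (σ γ : V → ℝ) (τ : V → V → ℝ) : ℝ :=
  ∑ ω : Coins V, coinWeight σ γ τ ω * ((everFlee A ω).card : ℝ)

/- **Statement 14 (2FleeSIR extent is dominated by SIR extent).** On any undirected
(symmetric) graph, couple the 2FleeSIR and SIR epidemics using identical initial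
infectees, removal coins and per-edge transmission coins (the same `ω`).  Then for
every coin outcome the set of ever-infected nodes under 2FleeSIR is a subset of the
one under SIR; consequently the mean final extent of 2FleeSIR is at most that of SIR. -/
section Aux

variable (A : V → V → Bool) (ω : Coins V)

/-- Ever-infected up to time `t` in SIR. -/
def sU (t : ℕ) : Finset V := (sirProc A ω t).1 ∪ (sirProc A ω t).2

lemma sU_mono_succ (t : ℕ) : sU A ω t ⊆ sU A ω (t + 1) := by
  intro v hv
  simp only [sU, sirProc, sirStep, Finset.mem_union] at hv ⊢
  rcases hv with h | h
  · exact Or.inr (Or.inr h)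
  · exact Or.inr (Or.inl h)

lemma sU_mono {s t : ℕ} (h : s ≤ t) : sU A ω s ⊆ sU A ω t := by
  induction t with
  | zero => simpa [Nat.le_zero.mp h] using Finset.Subset.refl _
  | succ n ih =>
    rcases Nat.lt_or_ge s (n + 1) with h' | h'
    · exact (ih (Nat.lt_succ_iff.mp h')).trans (sU_mono_succ A ω n)
    · have : s = n + 1 := le_antisymm h h'
      subst this; exact Finset.Subset.refl _

lemma mem_R_exists (t : ℕ) : ∀ u ∈ (sirProc A ω t).2, ∃ s < t, u ∈ (sirProc A ω s).1 := by
  induction t with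
  | zero => intro u hu; simp [sirProc] at hu
  | succ n ih =>
    intro u hu
    simp only [sirProc, sirStep, Finset.mem_union] at hu
    rcases hu with h | h
    · obtain ⟨s, hs, hm⟩ := ih u h
      exact ⟨s, Nat.lt_succ_of_lt hs, hm⟩
    · exact ⟨n, Nat.lt_succ_self n, h⟩

lemma transmit {u v : V} {s : ℕ} (hu : u ∈ (sirProc A ω s).1)
    (hrem : ω.2.1 u = false) (hA : A u v = true) (hτ : ω.2.2 u v = true) :
    v ∈ sU A ω (s + 1) := by
  by_cases hv : v ∈ sU A ω s
  · exact sU_mono_succ A ω s hv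
  · simp only [sU, Finset.mem_union, not_or] at hv
    simp only [sU, sirProc, sirStep, Finset.mem_union, Finset.mem_filter, Finset.mem_univ,
      true_and]
    exact Or.inl ⟨hv.1, hv.2, u, hu, hrem, hA, hτ⟩

lemma flee_sub (t : ℕ) :
    (fleeProc A ω t).1 ∪ (fleeProc A ω t).2.1 ⊆ sU A ω t := by
  induction t with
  | zero =>
    intro v hv
    simp only [fleeProc, Finset.mem_union] at hv
    simp only [sU, sirProc, Finset.mem_union]
    rcases hv with h | h
    · exact Or.inl h
    · simp at h
  | succ n ih =>
    intro v hv
    simp only [fleeProc, fleeStep, Finset.mem_union, Finset.mem_filter, Finset.mem_univ,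
      true_and] at hv
    rcases hv with ⟨-, -, -, u, hu, hrem, hA, hτc⟩ | h
    · have hu' : u ∈ sU A ω n := ih (Finset.mem_union_left _ hu)
      simp only [sU, Finset.mem_union] at hu'
      rcases hu' with h1 | h2
      · exact transmit A ω h1 hrem hA hτc
      · obtain ⟨s, hs, hm⟩ := mem_R_exists A ω n u h2
        exact sU_mono A ω (Nat.succ_le_succ hs.le)
          (transmit A ω hm hrem hA hτc)
    · rcases h with h | h
      · exact sU_mono_succ A ω n (ih (Finset.mem_union_right _ h))
      · exact sU_mono_succ A ω n (ih (Finset.mem_union_left _ h))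

lemma coinWeight_nonneg (σ γ : V → ℝ) (τ : V → V → ℝ)
    (hσ : ∀ v, 0 ≤ σ v ∧ σ v ≤ 1) (hγ : ∀ v, 0 ≤ γ v ∧ γ v ≤ 1)
    (hτ : ∀ u v, 0 ≤ τ u v ∧ τ u v ≤ 1) (ω : Coins V) :
    0 ≤ coinWeight σ γ τ ω := by
  unfold coinWeight
  have h1 : (0:ℝ) ≤ ∏ v, if ω.1 v then σ v else 1 - σ v :=
    Finset.prod_nonneg fun v _ => by
      split <;> [exact (hσ v).1; linarith [(hσ v).2]]
  have h2 : (0:ℝ) ≤ ∏ v, if ω.2.1 v then γ v else 1 - γ v :=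
    Finset.prod_nonneg fun v _ => by
      split <;> [exact (hγ v).1; linarith [(hγ v).2]]
  have h3 : (0:ℝ) ≤ ∏ u, ∏ v, if ω.2.2 u v then τ u v else 1 - τ u v :=
    Finset.prod_nonneg fun u _ => Finset.prod_nonneg fun v _ => by
      split <;> [exact (hτ u v).1; linarith [(hτ u v).2]]
  positivity

end Aux

theorem flee_dominated_by_sir {V : Type*} [Fintype V] [DecidableEq V]
    (A : V → V → Bool) (hsym : ∀ u v, A u v = A v u)
    (σ γ : V → ℝ) (τ : V → V → ℝ)
    (hσ : ∀ v, 0 ≤ σ v ∧ σ v ≤ 1) (hγ : ∀ v, 0 ≤ γ v ∧ γ v ≤ 1)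
    (hτ : ∀ u v, 0 ≤ τ u v ∧ τ u v ≤ 1) :
    (∀ ω : Coins V, everFlee A ω ⊆ everInf A ω) ∧
    fleeMeanExtent A σ γ τ ≤ meanExtent A σ γ τ := by
  have hsub : ∀ ω : Coins V, everFlee A ω ⊆ everInf A ω := by
    intro ω
    have := flee_sub A ω (Fintype.card V)
    simpa [everFlee, everInf, sU] using this
  refine ⟨hsub, ?_⟩
  unfold fleeMeanExtent meanExtent
  apply Finset.sum_le_sum
  intro ω _
  apply mul_le_mul_of_nonneg_left _ (coinWeight_nonneg σ γ τ hσ hγ hτ ω)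
  exact_mod_cast Finset.card_le_card (hsub ω)
end

section
/- (Monotonicity can fail on average over networks only via topology: bridge-edge amplification.) For every M > 0 there exists a graph G consisting of two cliques of size m joined by a single bridge edge, and transmission functions τ₁, τ₂ with τ₁ larger than τ₂ on every edge except the bridge (where τ₁ is smaller), such that the mean final SIR extent under τ₂ exceeds the mean extent under τ₁ by at least M. -/
open Finset

variable {V : Type*} [Fintype V] [DecidableEq V]

/-- Two cliques of size `m+1` (on `Fin (m+1) ⊕ Fin (m+1)`) joined by the single
bridge edge between `inl 0` and `inr 0` (in both directions). -/
def twoCliqueBridge (m : ℕ) : (Fin (m+1) ⊕ Fin (m+1)) → (Fin (m+1) ⊕ Fin (m+1)) → Bool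
  | .inl a, .inl b => decide (a ≠ b)
  | .inr a, .inr b => decide (a ≠ b)
  | .inl a, .inr b => decide (a = 0 ∧ b = 0)
  | .inr a, .inl b => decide (a = 0 ∧ b = 0)

/-- Whether `(x, y)` is the bridge edge of the two-clique graph. -/
def isBridge {m : ℕ} (x y : Fin (m+1) ⊕ Fin (m+1)) : Prop :=
  (x = Sum.inl 0 ∧ y = Sum.inr 0) ∨ (x = Sum.inr 0 ∧ y = Sum.inl 0)

namespace SirAux

def bB {m : ℕ} : (Fin (m+1) ⊕ Fin (m+1)) → (Fin (m+1) ⊕ Fin (m+1)) → Bool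
  | .inl a, .inr b => decide (a = 0 ∧ b = 0)
  | .inr a, .inl b => decide (a = 0 ∧ b = 0)
  | _, _ => false

lemma bB_iff {m : ℕ} (x y : Fin (m+1) ⊕ Fin (m+1)) : bB x y = true ↔ isBridge x y := by
  cases x <;> cases y <;> simp [bB, isBridge]

variable {V : Type*} [Fintype V] [DecidableEq V]

lemma sirProc_snd (A : V → V → Bool) (ω : Coins V) (t : ℕ) :
    (sirProc A ω (t+1)).2 = (sirProc A ω t).2 ∪ (sirProc A ω t).1 := rfl

lemma mem_sirProc_succ_fst {A : V → V → Bool} {ω : Coins V} {t : ℕ} {v : V} :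
    v ∈ (sirProc A ω (t+1)).1 ↔ v ∉ (sirProc A ω t).1 ∧ v ∉ (sirProc A ω t).2 ∧
      ∃ u ∈ (sirProc A ω t).1, ω.2.1 u = false ∧ A u v = true ∧ ω.2.2 u v = true := by
  simp [sirProc, sirStep]

lemma mem_sirProc_zero_fst {A : V → V → Bool} {ω : Coins V} {v : V} :
    v ∈ (sirProc A ω 0).1 ↔ ω.1 v = true := by
  simp [sirProc]

def U (A : V → V → Bool) (ω : Coins V) (t : ℕ) : Finset V :=
  (sirProc A ω t).1 ∪ (sirProc A ω t).2

lemma U_succ (A : V → V → Bool) (ω : Coins V) (t : ℕ) : U A ω t ⊆ U A ω (t+1) := by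
  intro v hv
  have h2 := sirProc_snd A ω t
  simp only [U, mem_union] at hv ⊢
  right; rw [h2, mem_union]; tauto

lemma U_mono (A : V → V → Bool) (ω : Coins V) {s t : ℕ} (h : s ≤ t) :
    U A ω s ⊆ U A ω t := by
  induction t with
  | zero => simpa [Nat.le_zero.mp h]
  | succ t ih =>
    rcases Nat.lt_or_ge s (t+1) with h' | h'
    · exact (ih (Nat.lt_succ_iff.mp h')).trans (U_succ A ω t)
    · have : s = t + 1 := le_antisymm h h'
      simp [this]


section Concrete
variable {m : ℕ}

abbrev Vm (m : ℕ) := Fin (m+1) ⊕ Fin (m+1)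

/-- the point masses -/
def ω0 (m : ℕ) : Coins (Vm m) :=
  (fun v => decide (v = Sum.inl 0), fun _ => false, fun u v => !bB u v)

def ωs (m : ℕ) : Coins (Vm m) :=
  (fun v => decide (v = Sum.inl 0), fun _ => false, fun _ _ => true)

def σ0 (m : ℕ) : Vm m → ℝ := fun x => if x = Sum.inl 0 then 1 else 0

def τ1 (m : ℕ) : Vm m → Vm m → ℝ := fun x y => if bB x y then 0 else 1

lemma weight_ω0 : coinWeight (σ0 m) (fun _ => 0) (τ1 m) (ω0 m) = 1 := by
  unfold coinWeight
  have h1 : (∏ v, if (ω0 m).1 v then σ0 m v else 1 - σ0 m v) = 1 := by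
    apply Finset.prod_eq_one; intro v _
    by_cases h : v = Sum.inl 0 <;> simp [ω0, σ0, h]
  have h2 : (∏ v : Vm m, if (ω0 m).2.1 v then (0:ℝ) else 1 - 0) = 1 := by
    apply Finset.prod_eq_one; intro v _; simp [ω0]
  have h3 : (∏ u, ∏ v, if (ω0 m).2.2 u v then τ1 m u v else 1 - τ1 m u v) = 1 := by
    apply Finset.prod_eq_one; intro u _
    apply Finset.prod_eq_one; intro v _
    by_cases h : bB u v <;> simp [ω0, τ1, h]
  rw [h1, h2, h3]; ring

lemma weight_ne_ω0 {ω : Coins (Vm m)} (h : ω ≠ ω0 m) :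
    coinWeight (σ0 m) (fun _ => 0) (τ1 m) ω = 0 := by
  unfold coinWeight
  by_cases h1 : ω.1 = (ω0 m).1
  · by_cases h2 : ω.2.1 = (ω0 m).2.1
    · by_cases h3 : ω.2.2 = (ω0 m).2.2
      · exact absurd (Prod.ext h1 (Prod.ext h2 h3)) h
      · obtain ⟨u, hu⟩ := Function.ne_iff.mp h3
        obtain ⟨v, hv⟩ := Function.ne_iff.mp hu
        have hf : (if ω.2.2 u v then τ1 m u v else 1 - τ1 m u v) = 0 := by
          cases hb : bB u v <;> cases hc : ω.2.2 u v <;>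
            simp [ω0, hb, hc, τ1] at hv ⊢
        have h3' : (∏ u, ∏ v, if ω.2.2 u v then τ1 m u v else 1 - τ1 m u v) = 0 :=
          Finset.prod_eq_zero (Finset.mem_univ u)
            (Finset.prod_eq_zero (Finset.mem_univ v) hf)
        rw [h3', mul_zero]
    · obtain ⟨v, hv⟩ := Function.ne_iff.mp h2
      have hf : (if ω.2.1 v then (0:ℝ) else 1 - 0) = 0 := by
        cases hc : ω.2.1 v <;> simp [ω0, hc] at hv ⊢
      have h2' : (∏ v, if ω.2.1 v then (0:ℝ) else 1 - 0) = 0 :=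
        Finset.prod_eq_zero (Finset.mem_univ v) hf
      rw [h2', mul_zero, zero_mul]
  · obtain ⟨v, hv⟩ := Function.ne_iff.mp h1
    have hf : (if ω.1 v then σ0 m v else 1 - σ0 m v) = 0 := by
      by_cases hv0 : v = Sum.inl 0
      · subst hv0
        cases hc : ω.1 (Sum.inl 0) <;> simp [ω0, hc, σ0] at hv ⊢
      · cases hc : ω.1 v <;> simp [ω0, hc, hv0, σ0] at hv ⊢
    have h1' : (∏ v, if ω.1 v then σ0 m v else 1 - σ0 m v) = 0 :=
      Finset.prod_eq_zero (Finset.mem_univ v) hf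
    rw [h1', zero_mul, zero_mul]


lemma meanExtent_tau1 :
    meanExtent (twoCliqueBridge m) (σ0 m) (fun _ => 0) (τ1 m)
      = ((everInf (twoCliqueBridge m) (ω0 m)).card : ℝ) := by
  unfold meanExtent
  rw [Finset.sum_eq_single (ω0 m)]
  · rw [weight_ω0, one_mul]
  · intro ω _ hne; rw [weight_ne_ω0 hne, zero_mul]
  · intro h; exact absurd (Finset.mem_univ _) h

lemma U_ω0_left (t : ℕ) : ∀ v ∈ U (twoCliqueBridge m) (ω0 m) t, v.isLeft := by
  induction t with
  | zero =>
    intro v hv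
    simp only [U, mem_union] at hv
    rcases hv with hv | hv
    · rw [mem_sirProc_zero_fst] at hv
      have : v = Sum.inl 0 := by simpa [ω0] using hv
      simp [this]
    · simp [sirProc] at hv
  | succ t ih =>
    intro v hv
    simp only [U, mem_union] at hv
    rcases hv with hv | hv
    · rw [mem_sirProc_succ_fst] at hv
      obtain ⟨-, -, u, hu, -, hA, hcoin⟩ := hv
      have hul : u.isLeft := ih u (Finset.mem_union_left _ hu)
      obtain ⟨a, rfl⟩ := Sum.isLeft_iff.mp hul
      rcases v with c | b
      · simp
      · exfalso
        have hab : a = 0 ∧ b = 0 := by simpa [twoCliqueBridge] using hA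
        obtain ⟨rfl, rfl⟩ := hab
        simp [ω0, bB] at hcoin
    · have : v ∈ U (twoCliqueBridge m) (ω0 m) t := by
        rw [sirProc_snd] at hv
        simpa [U, mem_union, or_comm] using Finset.mem_union.mp hv
      exact ih v this

lemma card_everInf_ω0 : (everInf (twoCliqueBridge m) (ω0 m)).card ≤ m + 1 := by
  have hsub : everInf (twoCliqueBridge m) (ω0 m) ⊆
      Finset.univ.image (Sum.inl : Fin (m+1) → Vm m) := by
    intro v hv
    have hl := U_ω0_left (Fintype.card (Vm m)) v hv
    obtain ⟨a, rfl⟩ := Sum.isLeft_iff.mp hl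
    exact Finset.mem_image_of_mem _ (Finset.mem_univ a)
  calc (everInf (twoCliqueBridge m) (ω0 m)).card
      ≤ (Finset.univ.image (Sum.inl : Fin (m+1) → Vm m)).card := Finset.card_le_card hsub
    _ = m + 1 := by
        rw [Finset.card_image_of_injective _ Sum.inl_injective, Finset.card_univ,
          Fintype.card_fin]

lemma univ_subset_U2 :
    (Finset.univ : Finset (Vm m)) ⊆ U (twoCliqueBridge m) (ωs m) 2 := by
  have hI0 : ∀ v : Vm m, v ∈ (sirProc (twoCliqueBridge m) (ωs m) 0).1 ↔ v = Sum.inl 0 := by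
    intro v; rw [mem_sirProc_zero_fst]; simp [ωs]
  have hR0 : (sirProc (twoCliqueBridge m) (ωs m) 0).2 = (∅ : Finset (Vm m)) := rfl
  have hrem : ∀ u : Vm m, (ωs m).2.1 u = false := fun _ => rfl
  have hcoin : ∀ u v : Vm m, (ωs m).2.2 u v = true := fun _ _ => rfl
  have hI1 : ∀ v : Vm m, v ∈ (sirProc (twoCliqueBridge m) (ωs m) 1).1 ↔
      v ≠ Sum.inl 0 ∧ twoCliqueBridge m (Sum.inl 0) v = true := by
    intro v
    rw [mem_sirProc_succ_fst]
    constructor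
    · rintro ⟨hv1, -, u, hu, -, hA, -⟩
      rw [hI0] at hu; subst hu
      exact ⟨fun h => hv1 ((hI0 v).mpr h), hA⟩
    · rintro ⟨hne, hA⟩
      exact ⟨fun h => hne ((hI0 v).mp h), by simp [hR0],
        Sum.inl 0, (hI0 _).mpr rfl, hrem _, hA, hcoin _ _⟩
  have hinr0 : (Sum.inr 0 : Vm m) ∈ (sirProc (twoCliqueBridge m) (ωs m) 1).1 := by
    rw [hI1]; exact ⟨by simp, by simp [twoCliqueBridge]⟩
  intro v _
  rcases v with a | b
  · by_cases ha : a = 0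
    · subst ha
      have h0 : (Sum.inl 0 : Vm m) ∈ U (twoCliqueBridge m) (ωs m) 0 :=
        Finset.mem_union_left _ ((hI0 _).mpr rfl)
      exact U_mono _ _ (by norm_num) h0
    · have h1 : (Sum.inl a : Vm m) ∈ (sirProc (twoCliqueBridge m) (ωs m) 1).1 := by
        rw [hI1]
        refine ⟨by simp [ha], by simp [twoCliqueBridge, Ne.symm ha]⟩
      exact U_mono _ _ one_le_two (Finset.mem_union_left _ h1)
  · by_cases hb : b = 0
    · subst hb; exact U_mono _ _ one_le_two (Finset.mem_union_left _ hinr0)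
    · have h2 : (Sum.inr b : Vm m) ∈ (sirProc (twoCliqueBridge m) (ωs m) 2).1 := by
        rw [mem_sirProc_succ_fst]
        refine ⟨?_, ?_, Sum.inr 0, hinr0, hrem _, ?_, hcoin _ _⟩
        · rw [hI1]; rintro ⟨-, hA⟩
          simp [twoCliqueBridge, hb] at hA
        · have hR1 : (sirProc (twoCliqueBridge m) (ωs m) 1).2 =
              (sirProc (twoCliqueBridge m) (ωs m) 0).2 ∪
              (sirProc (twoCliqueBridge m) (ωs m) 0).1 := rfl
          rw [hR1, hR0]
          simp only [Finset.empty_union]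
          intro h; exact absurd ((hI0 _).mp h) (by simp)
        · simp [twoCliqueBridge, Ne.symm hb]
      exact Finset.mem_union_left _ h2

lemma everInf_ωs_eq : everInf (twoCliqueBridge m) (ωs m) = Finset.univ := by
  have h2 : 2 ≤ Fintype.card (Vm m) := by
    simp only [Fintype.card_sum, Fintype.card_fin]; omega
  have := univ_subset_U2.trans (U_mono (twoCliqueBridge m) (ωs m) h2)
  exact Finset.univ_subset_iff.mp this


def τ2 (m : ℕ) (ε : ℝ) : Vm m → Vm m → ℝ := fun x y => if bB x y then 1 else 1 - ε

lemma weight_ωs {ε : ℝ} (hε0 : 0 ≤ ε) (hε1 : ε ≤ 1) :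
    1 - (Fintype.card (Vm m) * Fintype.card (Vm m) : ℕ) * ε ≤
      coinWeight (σ0 m) (fun _ => 0) (τ2 m ε) (ωs m) := by
  have h1 : (∏ v, if (ωs m).1 v then σ0 m v else 1 - σ0 m v) = 1 := by
    apply Finset.prod_eq_one; intro v _
    by_cases h : v = Sum.inl 0 <;> simp [ωs, σ0, h]
  have h2 : (∏ v : Vm m, if (ωs m).2.1 v then (0:ℝ) else 1 - 0) = 1 := by
    apply Finset.prod_eq_one; intro v _; simp [ωs]
  unfold coinWeight
  rw [h1, h2, one_mul, one_mul]
  have hstep : ((1 - ε) ^ (Fintype.card (Vm m) * Fintype.card (Vm m)) : ℝ) ≤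
      ∏ u, ∏ v, if (ωs m).2.2 u v then τ2 m ε u v else 1 - τ2 m ε u v := by
    have hpow : ((1 - ε) ^ (Fintype.card (Vm m) * Fintype.card (Vm m)) : ℝ) =
        ∏ _u : Vm m, ∏ _v : Vm m, (1 - ε) := by
      simp [Finset.prod_const, Finset.card_univ, ← pow_mul]
    rw [hpow]
    apply Finset.prod_le_prod
    · intro u _
      exact Finset.prod_nonneg fun v _ => by linarith
    · intro u _
      apply Finset.prod_le_prod
      · intro v _; linarith
      · intro v _
        have : (ωs m).2.2 u v = true := rfl
        rw [this, if_pos rfl]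
        by_cases h : bB u v <;> simp [τ2, h] <;> linarith
  refine le_trans ?_ hstep
  have := one_add_mul_le_pow (by linarith : (-2:ℝ) ≤ -ε)
    (Fintype.card (Vm m) * Fintype.card (Vm m))
  have heq : (1 + -ε : ℝ) = 1 - ε := by ring
  rw [heq] at this
  push_cast at this ⊢
  linarith

lemma coinWeight_nonneg' {σ γ : V → ℝ} {τ : V → V → ℝ}
    (hσ : ∀ v, 0 ≤ σ v ∧ σ v ≤ 1) (hγ : ∀ v, 0 ≤ γ v ∧ γ v ≤ 1)
    (hτ : ∀ u v, 0 ≤ τ u v ∧ τ u v ≤ 1) (ω : Coins V) :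
    0 ≤ coinWeight σ γ τ ω := by
  unfold coinWeight
  apply mul_nonneg (mul_nonneg ?_ ?_) ?_
  · apply Finset.prod_nonneg; intro v _
    rcases hσ v with ⟨h0, h1⟩
    split <;> linarith
  · apply Finset.prod_nonneg; intro v _
    rcases hγ v with ⟨h0, h1⟩
    split <;> linarith
  · apply Finset.prod_nonneg; intro u _
    apply Finset.prod_nonneg; intro v _
    rcases hτ u v with ⟨h0, h1⟩
    split <;> linarith

lemma meanExtent_ge_single {A : V → V → Bool} {σ γ : V → ℝ} {τ : V → V → ℝ}
    (hσ : ∀ v, 0 ≤ σ v ∧ σ v ≤ 1) (hγ : ∀ v, 0 ≤ γ v ∧ γ v ≤ 1)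
    (hτ : ∀ u v, 0 ≤ τ u v ∧ τ u v ≤ 1) (ω : Coins V) :
    coinWeight σ γ τ ω * ((everInf A ω).card : ℝ) ≤ meanExtent A σ γ τ := by
  unfold meanExtent
  apply Finset.single_le_sum (f := fun ω' => coinWeight σ γ τ ω' * ((everInf A ω').card : ℝ))
    (fun ω' _ => mul_nonneg (coinWeight_nonneg' hσ hγ hτ ω') (Nat.cast_nonneg _))
    (Finset.mem_univ ω)

end Concrete
end SirAux


/-- **bridge-edge amplification.** For every `M > 0` there is a graph
made of two cliques joined by a single bridge edge, with `γ ≡ 0` and a single initial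
infectee in the first clique, and transmission functions `τ₁, τ₂` such that `τ₁` is
strictly larger than `τ₂` on every edge except the bridge (where `τ₁` is strictly
smaller), yet the mean final extent under `τ₂` exceeds the one under `τ₁` by at
least `M`. -/
theorem sir_bridge_amplification :
    ∀ M : ℝ, 0 < M → ∃ m : ℕ,
      ∃ τ₁ τ₂ : (Fin (m+1) ⊕ Fin (m+1)) → (Fin (m+1) ⊕ Fin (m+1)) → ℝ,
        (∀ x y, 0 ≤ τ₁ x y ∧ τ₁ x y ≤ 1) ∧ (∀ x y, 0 ≤ τ₂ x y ∧ τ₂ x y ≤ 1) ∧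
        (∀ x y, twoCliqueBridge m x y = true → ¬ isBridge x y → τ₂ x y < τ₁ x y) ∧
        (∀ x y, isBridge x y → τ₁ x y < τ₂ x y) ∧
        meanExtent (twoCliqueBridge m)
            (fun x => if x = Sum.inl 0 then 1 else 0) (fun _ => 0) τ₂
          - meanExtent (twoCliqueBridge m)
            (fun x => if x = Sum.inl 0 then 1 else 0) (fun _ => 0) τ₁
          ≥ M := by
  intro M hM
  set m : ℕ := ⌈M⌉₊ with hm
  have hK : (0:ℝ) < (m:ℝ) + 1 := by positivity
  set ε : ℝ := 1 / (16 * ((m:ℝ) + 1)^3) with hε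
  have hε0 : 0 < ε := by positivity
  have hε1 : ε ≤ 1 := by
    have h1K : 1 ≤ (m:ℝ) + 1 := by
      have := Nat.cast_nonneg (α := ℝ) m; linarith
    have h3 : 1 ≤ ((m:ℝ) + 1)^3 := one_le_pow₀ h1K
    rw [hε, div_le_one (by positivity)]
    linarith
  have hτ2b : ∀ x y : Fin (m+1) ⊕ Fin (m+1),
      0 ≤ SirAux.τ2 m ε x y ∧ SirAux.τ2 m ε x y ≤ 1 := by
    intro x y; unfold SirAux.τ2; split <;> constructor <;> linarith
  refine ⟨m, SirAux.τ1 m, SirAux.τ2 m ε, ?_, hτ2b, ?_, ?_, ?_⟩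
  · intro x y; unfold SirAux.τ1; split <;> norm_num
  · intro x y _ hnb
    have hb : SirAux.bB x y = false := by
      rcases Bool.eq_false_or_eq_true (SirAux.bB x y) with h | h
      · exact absurd ((SirAux.bB_iff x y).mp h) hnb
      · exact h
    simp only [SirAux.τ1, SirAux.τ2, hb, Bool.false_eq_true, if_false]
    linarith
  · intro x y hbr
    have hb : SirAux.bB x y = true := (SirAux.bB_iff x y).mpr hbr
    simp only [SirAux.τ1, SirAux.τ2, hb, if_true]
    norm_num
  · have e1 : (fun x : Fin (m+1) ⊕ Fin (m+1) => if x = Sum.inl 0 then (1:ℝ) else 0)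
        = SirAux.σ0 m := rfl
    rw [e1]
    have hub : meanExtent (twoCliqueBridge m) (SirAux.σ0 m) (fun _ => 0) (SirAux.τ1 m)
        ≤ (m:ℝ) + 1 := by
      rw [SirAux.meanExtent_tau1]
      exact_mod_cast SirAux.card_everInf_ω0 (m := m)
    have hσb : ∀ v : Fin (m+1) ⊕ Fin (m+1), 0 ≤ SirAux.σ0 m v ∧ SirAux.σ0 m v ≤ 1 := by
      intro v; unfold SirAux.σ0; split <;> norm_num
    have hγb : ∀ v : Fin (m+1) ⊕ Fin (m+1), (0:ℝ) ≤ (fun _ => (0:ℝ)) v ∧ (fun _ => (0:ℝ)) v ≤ 1 := by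
      intro v; norm_num
    have h1 := SirAux.meanExtent_ge_single (A := twoCliqueBridge m) hσb hγb hτ2b (SirAux.ωs m)
    have h2 := SirAux.weight_ωs (m := m) hε0.le hε1
    have hcard : ((everInf (twoCliqueBridge m) (SirAux.ωs m)).card : ℝ)
        = 2 * ((m:ℝ) + 1) := by
      rw [SirAux.everInf_ωs_eq, Finset.card_univ]
      simp [Fintype.card_sum]
      push_cast; ring
    have hN : ((Fintype.card (SirAux.Vm m) * Fintype.card (SirAux.Vm m) : ℕ) : ℝ)
        = (2 * ((m:ℝ) + 1))^2 := by
      simp [Fintype.card_sum]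
      push_cast; ring
    have hlb : (1 - (2 * ((m:ℝ) + 1))^2 * ε) * (2 * ((m:ℝ) + 1))
        ≤ meanExtent (twoCliqueBridge m) (SirAux.σ0 m) (fun _ => 0) (SirAux.τ2 m ε) := by
      refine le_trans ?_ h1
      rw [hcard]
      apply mul_le_mul_of_nonneg_right _ (by positivity)
      rw [← hN]
      exact h2
    have hεval : ε * (16 * ((m:ℝ) + 1)^3) = 1 := by
      rw [hε]; field_simp
    have hMm : M ≤ (m:ℝ) := by rw [hm]; exact Nat.le_ceil M
    nlinarith [hlb, hub, hεval, hK, hMm]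
end
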